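/- Let Ψ : ℕ → ℝ satisfy Ψ(1) = 1, Ψ strictly increasing to ∞, Ψ(n)/n → 0, and lim_{n→∞} Ψ(2n)/Ψ(n) = 1. Then the real Marcinkiewicz space m_Ψ = { x : sup_n (Σ_{k=1}^n x*_k)/Ψ(n) < ∞ } admits a nonzero continuous symmetric linear functional. -/

import Mathlib

open scoped Classical

/-- A Banach sequence space: a subspace of `ℕ → ℝ` with a complete monotone norm
such that the canonical unit vectors have norm one. -/
structure BanachSeqSpace where
  X : Submodule ℝ (ℕ → ℝ)
  N : (ℕ → ℝ) → ℝ
  N_nonneg : ∀ x ∈ X, 0 ≤ N x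
  N_eq_zero : ∀ x ∈ X, N x = 0 → x = 0
  N_add : ∀ x ∈ X, ∀ y ∈ X, N (x + y) ≤ N x + N y
  N_smul : ∀ (c : ℝ), ∀ x ∈ X, N (c • x) = |c| * N x
  complete : ∀ f : ℕ → ℕ → ℝ, (∀ k, f k ∈ X) →
    (∀ ε : ℝ, 0 < ε → ∃ K, ∀ m ≥ K, ∀ n ≥ K, N (f m - f n) < ε) →
    ∃ x ∈ X, ∀ ε : ℝ, 0 < ε → ∃ K, ∀ k ≥ K, N (f k - x) < ε
  mono_mem : ∀ (x : ℕ → ℝ), ∀ y ∈ X, (∀ n, |x n| ≤ |y n|) → x ∈ X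
  mono_norm : ∀ (x : ℕ → ℝ), ∀ y ∈ X, (∀ n, |x n| ≤ |y n|) → N x ≤ N y
  unit_mem : ∀ k : ℕ, (fun n => if n = k then (1 : ℝ) else 0) ∈ X
  unit_norm : ∀ k : ℕ, N (fun n => if n = k then (1 : ℝ) else 0) = 1

/-- A Banach sequence space is symmetric if it is stable under permutations of the
coordinates, with equal norm. -/
def IsSymmetric (S : BanachSeqSpace) : Prop :=
  ∀ x ∈ S.X, ∀ σ : Equiv.Perm ℕ, (x ∘ σ) ∈ S.X ∧ S.N (x ∘ σ) = S.N x

/-- The decreasing rearrangement of a (bounded) sequence, indexed from 0: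
`dstar x n` is the paper's `x*_(n+1) = inf { sup_{k ∉ J} |x k| : |J| ≤ n }`. -/
noncomputable def dstar (x : ℕ → ℝ) (n : ℕ) : ℝ :=
  sInf {a : ℝ | ∃ J : Finset ℕ, J.card ≤ n ∧ a = sSup {b : ℝ | ∃ k, k ∉ J ∧ b = |x k|}}

/-- The closing up of a sequence: its nonzero terms in order, padded with zeros. -/
noncomputable def closingUp (x : ℕ → ℝ) (n : ℕ) : ℝ :=
  if {k | x k ≠ 0}.Infinite ∨ n < {k | x k ≠ 0}.ncard
  then x (Nat.nth (fun k => x k ≠ 0) n) else 0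

open Filter

open Filter Topology

namespace SymAux

noncomputable section


def aset (x : ℕ → ℝ) (J : Finset ℕ) : Set ℝ := {b : ℝ | ∃ k, k ∉ J ∧ b = |x k|}

lemma aset_nonempty (x : ℕ → ℝ) (J : Finset ℕ) : (aset x J).Nonempty := by
  obtain ⟨k, -, hk⟩ := Set.infinite_univ.exists_notMem_finset J
  exact ⟨|x k|, k, hk, rfl⟩

lemma aset_bddAbove {x : ℕ → ℝ} {C : ℝ} (hx : ∀ n, |x n| ≤ C) (J : Finset ℕ) :
    BddAbove (aset x J) := ⟨C, by rintro b ⟨k, -, rfl⟩; exact hx k⟩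

lemma aset_sSup_nonneg {x : ℕ → ℝ} {C : ℝ} (hx : ∀ n, |x n| ≤ C) (J : Finset ℕ) :
    0 ≤ sSup (aset x J) := by
  obtain ⟨b, k, hk, rfl⟩ := aset_nonempty x J
  exact le_trans (abs_nonneg _) (le_csSup (aset_bddAbove hx J) ⟨k, hk, rfl⟩)

def dset (x : ℕ → ℝ) (n : ℕ) : Set ℝ :=
  {a | ∃ J : Finset ℕ, J.card ≤ n ∧ a = sSup (aset x J)}

lemma dstar_eq (x : ℕ → ℝ) (n : ℕ) : dstar x n = sInf (dset x n) := rfl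

lemma dset_nonempty (x : ℕ → ℝ) (n : ℕ) : (dset x n).Nonempty :=
  ⟨_, ∅, by simp, rfl⟩

lemma dset_bddBelow {x : ℕ → ℝ} {C : ℝ} (hx : ∀ n, |x n| ≤ C) (n : ℕ) :
    BddBelow (dset x n) := ⟨0, by rintro a ⟨J, hJ, rfl⟩; exact aset_sSup_nonneg hx J⟩

lemma dstar_nonneg {x : ℕ → ℝ} {C : ℝ} (hx : ∀ n, |x n| ≤ C) (n : ℕ) :
    0 ≤ dstar x n := by
  rw [dstar_eq]
  exact le_csInf (dset_nonempty x n) (by rintro a ⟨J, hJ, rfl⟩; exact aset_sSup_nonneg hx J)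

lemma dstar_le_sSup {x : ℕ → ℝ} {C : ℝ} (hx : ∀ n, |x n| ≤ C) {J : Finset ℕ} {n : ℕ}
    (hJ : J.card ≤ n) : dstar x n ≤ sSup (aset x J) := by
  rw [dstar_eq]
  exact csInf_le (dset_bddBelow hx n) ⟨J, hJ, rfl⟩

lemma sum_abs_le {x : ℕ → ℝ} {C : ℝ} (hx : ∀ n, |x n| ≤ C) :
    ∀ (n : ℕ) (A : Finset ℕ), A.card ≤ n →
      ∑ m ∈ A, |x m| ≤ ∑ k ∈ Finset.range n, dstar x k := by
  intro n
  induction n with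
  | zero =>
    intro A hA
    simp [Finset.card_eq_zero.mp (Nat.le_zero.mp hA)]
  | succ n ih =>
    intro A hA
    rcases Nat.lt_or_ge A.card (n + 1) with h | h
    · calc ∑ m ∈ A, |x m| ≤ ∑ k ∈ Finset.range n, dstar x k := ih A (Nat.lt_succ_iff.mp h)
        _ ≤ ∑ k ∈ Finset.range (n + 1), dstar x k := by
            rw [Finset.sum_range_succ]
            exact le_add_of_nonneg_right (dstar_nonneg hx n)
    · have hcard : A.card = n + 1 := le_antisymm hA h
      have hne : A.Nonempty := Finset.card_pos.mp (by omega)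
      obtain ⟨a, haA, hmin⟩ := A.exists_min_image (fun m => |x m|) hne
      have h1 : ∑ m ∈ A.erase a, |x m| ≤ ∑ k ∈ Finset.range n, dstar x k :=
        ih _ (by rw [Finset.card_erase_of_mem haA, hcard]; simp)
      have h2 : |x a| ≤ dstar x n := by
        rw [dstar_eq]
        refine le_csInf (dset_nonempty x n) ?_
        rintro b ⟨J, hJ, rfl⟩
        have hAJ : ∃ m ∈ A, m ∉ J := by
          by_contra hcon
          push_neg at hcon
          have := Finset.card_le_card (fun m hm => hcon m hm)
          omega
        obtain ⟨m, hmA, hmJ⟩ := hAJ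
        exact le_trans (hmin m hmA) (le_csSup (aset_bddAbove hx J) ⟨m, hmJ, rfl⟩)
      calc ∑ m ∈ A, |x m| = |x a| + ∑ m ∈ A.erase a, |x m| :=
            (Finset.add_sum_erase _ _ haA).symm
        _ ≤ dstar x n + ∑ k ∈ Finset.range n, dstar x k := add_le_add h2 h1
        _ = ∑ k ∈ Finset.range (n + 1), dstar x k := by rw [Finset.sum_range_succ]; ring

lemma exists_finset {x : ℕ → ℝ} {C : ℝ} (hx : ∀ n, |x n| ≤ C) {ε : ℝ} (hε : 0 < ε) :
    ∀ n : ℕ, ∃ A : Finset ℕ, A.card = n ∧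
      ∑ k ∈ Finset.range n, dstar x k ≤ ∑ m ∈ A, |x m| + n * ε := by
  intro n
  induction n with
  | zero => exact ⟨∅, rfl, by simp⟩
  | succ n ih =>
    obtain ⟨A, hcard, hsum⟩ := ih
    have h1 : dstar x n ≤ sSup (aset x A) := dstar_le_sSup hx (le_of_eq hcard)
    obtain ⟨b, hb, hbgt⟩ := exists_lt_of_lt_csSup (aset_nonempty x A)
      (show sSup (aset x A) - ε < sSup (aset x A) by linarith)
    obtain ⟨k, hkA, rfl⟩ := hb
    refine ⟨insert k A, by rw [Finset.card_insert_of_notMem hkA, hcard], ?_⟩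
    rw [Finset.sum_range_succ, Finset.sum_insert hkA]
    push_cast
    linarith



def Ssum (x : ℕ → ℝ) (n : ℕ) : ℝ := ∑ k ∈ Finset.range n, dstar x k

lemma Ssum_nonneg {x : ℕ → ℝ} {C : ℝ} (hx : ∀ n, |x n| ≤ C) (n : ℕ) : 0 ≤ Ssum x n :=
  Finset.sum_nonneg fun k _ => dstar_nonneg hx k

lemma sum_le_Ssum {x : ℕ → ℝ} {C : ℝ} (hx : ∀ n, |x n| ≤ C) {A : Finset ℕ} {n : ℕ}
    (hA : A.card ≤ n) : ∑ m ∈ A, |x m| ≤ Ssum x n := sum_abs_le hx n A hA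

lemma Ssum_le_of_forall {x : ℕ → ℝ} {C : ℝ} (hx : ∀ n, |x n| ≤ C) {n : ℕ} {B : ℝ}
    (h : ∀ A : Finset ℕ, A.card ≤ n → ∑ m ∈ A, |x m| ≤ B) : Ssum x n ≤ B := by
  refine le_of_forall_pos_le_add fun ε hε => ?_
  have hε' : 0 < ε / (n + 1) := by positivity
  obtain ⟨A, hcard, hsum⟩ := exists_finset hx hε' n
  have h1 : (n : ℝ) * (ε / (n + 1)) ≤ ε := by
    rw [div_eq_mul_inv, ← mul_assoc]
    rw [mul_comm (n : ℝ) ε, mul_assoc]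
    nlinarith [mul_inv_cancel₀ (show ((n : ℝ) + 1) ≠ 0 by positivity),
      inv_nonneg.mpr (show (0:ℝ) ≤ (n:ℝ)+1 by positivity)]
  calc Ssum x n ≤ ∑ m ∈ A, |x m| + n * (ε / (n + 1)) := hsum
    _ ≤ B + ε := add_le_add (h A (le_of_eq hcard)) h1

lemma Ssum_add_le {x y : ℕ → ℝ} {C D : ℝ} (hx : ∀ n, |x n| ≤ C) (hy : ∀ n, |y n| ≤ D)
    (n : ℕ) : Ssum (x + y) n ≤ Ssum x n + Ssum y n := by
  refine Ssum_le_of_forall (C := C + D)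
    (fun m => le_trans (abs_add_le _ _) (add_le_add (hx m) (hy m))) (fun A hA => ?_)
  calc ∑ m ∈ A, |(x + y) m| ≤ ∑ m ∈ A, (|x m| + |y m|) :=
          Finset.sum_le_sum fun m _ => abs_add_le _ _
      _ = ∑ m ∈ A, |x m| + ∑ m ∈ A, |y m| := Finset.sum_add_distrib
      _ ≤ Ssum x n + Ssum y n := add_le_add (sum_le_Ssum hx hA) (sum_le_Ssum hy hA)

lemma Ssum_superadd {x y : ℕ → ℝ} {C D : ℝ} (hx : ∀ n, |x n| ≤ C) (hy : ∀ n, |y n| ≤ D)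
    (hx0 : ∀ m, 0 ≤ x m) (hy0 : ∀ m, 0 ≤ y m) (n : ℕ) :
    Ssum x n + Ssum y n ≤ Ssum (x + y) (2 * n) := by
  have hxy : ∀ m, |(x + y) m| ≤ C + D := fun m =>
    le_trans (abs_add_le _ _) (add_le_add (hx m) (hy m))
  refine le_of_forall_pos_le_add fun ε hε => ?_
  have hε' : 0 < ε / (2 * (n + 1)) := by positivity
  obtain ⟨A, hcA, hsA⟩ := exists_finset hx hε' n
  obtain ⟨B, hcB, hsB⟩ := exists_finset hy hε' n
  have hcup : (A ∪ B).card ≤ 2 * n := by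
    calc (A ∪ B).card ≤ A.card + B.card := Finset.card_union_le _ _
      _ ≤ 2 * n := by omega
  have key : ∑ m ∈ A, |x m| + ∑ m ∈ B, |y m| ≤ ∑ m ∈ A ∪ B, |(x + y) m| := by
    have e1 : ∀ m ∈ A ∪ B, |(x + y) m| = x m + y m := fun m _ => by
      rw [Pi.add_apply, abs_of_nonneg (add_nonneg (hx0 m) (hy0 m))]
    rw [Finset.sum_congr rfl e1, Finset.sum_add_distrib]
    have e2 : ∑ m ∈ A, |x m| ≤ ∑ m ∈ A ∪ B, x m := by
      rw [Finset.sum_congr rfl (fun m _ => abs_of_nonneg (hx0 m))]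
      exact Finset.sum_le_sum_of_subset_of_nonneg Finset.subset_union_left
        (fun m _ _ => hx0 m)
    have e3 : ∑ m ∈ B, |y m| ≤ ∑ m ∈ A ∪ B, y m := by
      rw [Finset.sum_congr rfl (fun m _ => abs_of_nonneg (hy0 m))]
      exact Finset.sum_le_sum_of_subset_of_nonneg Finset.subset_union_right
        (fun m _ _ => hy0 m)
    linarith
  have h1 : (n : ℝ) * (ε / (2 * (n + 1))) ≤ ε / 2 := by
    have hn1 : (0:ℝ) < (n:ℝ) + 1 := by positivity
    have e : (n:ℝ) * (ε / (2 * ((n:ℝ) + 1))) = ((n:ℝ)/((n:ℝ)+1)) * (ε/2) := by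
      field_simp
    have hle : (n:ℝ)/((n:ℝ)+1) ≤ 1 := by rw [div_le_one hn1]; linarith
    rw [e]
    nlinarith [hε.le]
  have hsA' : Ssum x n ≤ ∑ m ∈ A, |x m| + (n:ℝ) * (ε / (2 * ((n:ℝ) + 1))) := hsA
  have hsB' : Ssum y n ≤ ∑ m ∈ B, |y m| + (n:ℝ) * (ε / (2 * ((n:ℝ) + 1))) := hsB
  calc Ssum x n + Ssum y n
      ≤ ∑ m ∈ A, |x m| + ∑ m ∈ B, |y m| + 2 * ((n:ℝ) * (ε / (2 * ((n:ℝ) + 1)))) := by linarith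
    _ ≤ ∑ m ∈ A ∪ B, |(x + y) m| + ε := by linarith
    _ ≤ Ssum (x + y) (2 * n) + ε := by
        exact add_le_add_left (sum_le_Ssum hxy hcup) ε

lemma Ssum_smul {x : ℕ → ℝ} {C : ℝ} (hx : ∀ n, |x n| ≤ C) (c : ℝ) (n : ℕ) :
    Ssum (c • x) n = |c| * Ssum x n := by
  have hcx : ∀ m, |(c • x) m| ≤ |c| * C := fun m => by
    rw [Pi.smul_apply, smul_eq_mul, abs_mul]
    exact mul_le_mul_of_nonneg_left (hx m) (abs_nonneg c)
  have hsum : ∀ A : Finset ℕ, ∑ m ∈ A, |(c • x) m| = |c| * ∑ m ∈ A, |x m| := by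
    intro A
    rw [Finset.mul_sum]
    exact Finset.sum_congr rfl fun m _ => by rw [Pi.smul_apply, smul_eq_mul, abs_mul]
  refine le_antisymm ?_ ?_
  · refine Ssum_le_of_forall hcx fun A hA => ?_
    rw [hsum A]
    exact mul_le_mul_of_nonneg_left (sum_le_Ssum hx hA) (abs_nonneg c)
  · rcases eq_or_ne c 0 with rfl | hc
    · simp only [abs_zero, zero_mul]
      exact Ssum_nonneg hcx n
    · have hc' : 0 < |c| := abs_pos.mpr hc
      refine le_of_forall_pos_le_add fun ε hε => ?_
      have hε' : 0 < ε / (|c| * (n + 1)) := by positivity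
      obtain ⟨A, hcard, hsA⟩ := exists_finset hx hε' n
      have h1 : |c| * ((n:ℝ) * (ε / (|c| * (n + 1)))) ≤ ε := by
        rw [div_eq_mul_inv, mul_inv]
        have hn1 : (0:ℝ) < (n:ℝ) + 1 := by positivity
        have : |c| * ((n:ℝ) * (ε * (|c|⁻¹ * ((n:ℝ)+1)⁻¹)))
            = ((n:ℝ) * ((n:ℝ)+1)⁻¹) * ε * (|c| * |c|⁻¹) := by ring
        rw [this, mul_inv_cancel₀ (ne_of_gt hc'), mul_one]
        have h2 : (n:ℝ) * ((n:ℝ)+1)⁻¹ ≤ 1 := by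
          rw [← div_eq_mul_inv, div_le_one hn1]; linarith
        nlinarith
      calc |c| * Ssum x n ≤ |c| * (∑ m ∈ A, |x m| + n * (ε / (|c| * (n + 1)))) :=
            mul_le_mul_of_nonneg_left hsA (abs_nonneg c)
        _ = ∑ m ∈ A, |(c • x) m| + |c| * ((n:ℝ) * (ε / (|c| * (n + 1)))) := by
            rw [hsum A]; ring
        _ ≤ Ssum (c • x) n + ε := add_le_add (sum_le_Ssum hcx (le_of_eq hcard)) h1

lemma Ssum_mono_abs {x y : ℕ → ℝ} {D : ℝ} (hy : ∀ n, |y n| ≤ D)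
    (h : ∀ m, |x m| ≤ |y m|) (n : ℕ) : Ssum x n ≤ Ssum y n := by
  refine Ssum_le_of_forall (fun m => (h m).trans (hy m)) fun A hA => ?_
  exact le_trans (Finset.sum_le_sum fun m _ => h m) (sum_le_Ssum hy hA)

lemma Ssum_perm {x : ℕ → ℝ} {C : ℝ} (hx : ∀ n, |x n| ≤ C) (σ : Equiv.Perm ℕ) (n : ℕ) :
    Ssum (x ∘ σ) n = Ssum x n := by
  have key : ∀ (z : ℕ → ℝ) (D : ℝ), (∀ m, |z m| ≤ D) → ∀ τ : Equiv.Perm ℕ,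
      Ssum (z ∘ τ) n ≤ Ssum z n := by
    intro z D hz τ
    refine Ssum_le_of_forall (fun m => hz (τ m)) fun A hA => ?_
    have e : ∑ m ∈ A.image τ, |z m| = ∑ m ∈ A, |z (τ m)| :=
      Finset.sum_image (fun a _ b _ hab => τ.injective hab)
    calc ∑ m ∈ A, |(z ∘ τ) m| = ∑ m ∈ A.image τ, |z m| := e.symm
      _ ≤ Ssum z n := sum_le_Ssum hz (le_trans Finset.card_image_le hA)
  refine le_antisymm (key x C hx σ) ?_
  have h2 := key (x ∘ σ) C (fun m => hx (σ m)) σ.symm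
  have e : (x ∘ σ) ∘ σ.symm = x := funext fun m => congrArg x (σ.apply_symm_apply m)
  rwa [e] at h2



def ces (b : ℕ → ℝ) (m : ℕ) : ℝ := (m : ℝ)⁻¹ * ∑ i ∈ Finset.range m, b i

def U : Ultrafilter ℕ := hyperfilter ℕ

instance : (U : Filter ℕ).NeBot := Ultrafilter.neBot U

def BL (b : ℕ → ℝ) : ℝ := limUnder (U : Filter ℕ) (ces b)

lemma ces_abs_le {b : ℕ → ℝ} {M : ℝ} (hb : ∀ k, |b k| ≤ M) (m : ℕ) : |ces b m| ≤ M := by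
  have hM : 0 ≤ M := le_trans (abs_nonneg _) (hb 0)
  rcases Nat.eq_zero_or_pos m with rfl | hm
  · simp [ces, hM]
  · have h1 : |∑ i ∈ Finset.range m, b i| ≤ (m : ℝ) * M := by
      calc |∑ i ∈ Finset.range m, b i| ≤ ∑ i ∈ Finset.range m, |b i| :=
            Finset.abs_sum_le_sum_abs _ _
        _ ≤ ∑ _i ∈ Finset.range m, M := Finset.sum_le_sum fun i _ => hb i
        _ = (m : ℝ) * M := by simp [mul_comm]
    have hm' : (0:ℝ) < (m:ℝ) := by exact_mod_cast hm
    rw [ces, abs_mul, abs_inv, abs_of_pos hm']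
    calc (m:ℝ)⁻¹ * |∑ i ∈ Finset.range m, b i| ≤ (m:ℝ)⁻¹ * ((m:ℝ) * M) := by
          exact mul_le_mul_of_nonneg_left h1 (inv_nonneg.mpr hm'.le)
      _ = M := by field_simp

lemma BL_spec {b : ℕ → ℝ} {M : ℝ} (hb : ∀ k, |b k| ≤ M) :
    Tendsto (ces b) (U : Filter ℕ) (𝓝 (BL b)) := by
  have hmem : ∀ m, ces b m ∈ Set.Icc (-M) M := fun m => abs_le.mp (ces_abs_le hb m)
  have hle : (Ultrafilter.map (ces b) U : Filter ℝ) ≤ 𝓟 (Set.Icc (-M) M) := by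
    rw [Filter.le_principal_iff]
    refine Filter.mem_map.mpr ?_
    have : ces b ⁻¹' Set.Icc (-M) M = Set.univ := by
      ext m; simp [hmem m]
    rw [this]
    exact Filter.univ_mem
  obtain ⟨c, -, hc⟩ := isCompact_Icc.ultrafilter_le_nhds (Ultrafilter.map (ces b) U) hle
  have ht : Tendsto (ces b) (U : Filter ℕ) (𝓝 c) := hc
  rw [BL, ht.limUnder_eq]
  exact ht

lemma BL_tendsto {b : ℕ → ℝ} {l : ℝ} (h : Tendsto b atTop (𝓝 l)) : BL b = l := by
  have hc : Tendsto (ces b) atTop (𝓝 l) := h.cesaro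
  exact (hc.mono_left Nat.hyperfilter_le_atTop).limUnder_eq

lemma BL_const (c : ℝ) : BL (fun _ => c) = c := BL_tendsto tendsto_const_nhds

lemma BL_add {b b' : ℕ → ℝ} {M M' : ℝ} (hb : ∀ k, |b k| ≤ M) (hb' : ∀ k, |b' k| ≤ M') :
    BL (fun k => b k + b' k) = BL b + BL b' := by
  have e : ces (fun k => b k + b' k) = fun m => ces b m + ces b' m := by
    funext m
    simp only [ces, Finset.sum_add_distrib]
    ring
  have ht : Tendsto (ces fun k => b k + b' k) (U : Filter ℕ) (𝓝 (BL b + BL b')) := by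
    rw [e]; exact (BL_spec hb).add (BL_spec hb')
  exact ht.limUnder_eq

lemma BL_smul {b : ℕ → ℝ} {M : ℝ} (hb : ∀ k, |b k| ≤ M) (c : ℝ) :
    BL (fun k => c * b k) = c * BL b := by
  have e : ces (fun k => c * b k) = fun m => c * ces b m := by
    funext m
    simp only [ces, ← Finset.mul_sum]
    ring
  have ht : Tendsto (ces fun k => c * b k) (U : Filter ℕ) (𝓝 (c * BL b)) := by
    rw [e]; exact (BL_spec hb).const_mul c
  exact ht.limUnder_eq

lemma BL_le {b b' : ℕ → ℝ} {M M' : ℝ} (hb : ∀ k, |b k| ≤ M) (hb' : ∀ k, |b' k| ≤ M')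
    (h : ∀ k, b k ≤ b' k) : BL b ≤ BL b' := by
  refine le_of_tendsto_of_tendsto' (BL_spec hb) (BL_spec hb') fun m => ?_
  exact mul_le_mul_of_nonneg_left (Finset.sum_le_sum fun i _ => h i)
    (inv_nonneg.mpr (Nat.cast_nonneg m))

lemma BL_le_const {b : ℕ → ℝ} {M c : ℝ} (hb : ∀ k, |b k| ≤ M) (h : ∀ k, b k ≤ c) :
    BL b ≤ c := by
  have := BL_le (b' := fun _ => c) hb (fun _ => le_refl |c|) h
  rwa [BL_const] at this

lemma BL_const_le {b : ℕ → ℝ} {M c : ℝ} (hb : ∀ k, |b k| ≤ M) (h : ∀ k, c ≤ b k) :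
    c ≤ BL b := by
  have := BL_le (b := fun _ => c) (fun _ => le_refl |c|) hb h
  rwa [BL_const] at this

lemma BL_congr_null {b b' : ℕ → ℝ} {M M' : ℝ} (hb : ∀ k, |b k| ≤ M) (hb' : ∀ k, |b' k| ≤ M')
    (h : Tendsto (fun k => b k - b' k) atTop (𝓝 0)) : BL b = BL b' := by
  have hd : ∀ k, |b k - b' k| ≤ M + M' := fun k =>
    le_trans (abs_sub _ _) (add_le_add (hb k) (hb' k))
  have h1 : BL (fun k => b' k + (b k - b' k)) = BL b' + BL (fun k => b k - b' k) :=
    BL_add hb' hd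
  have h2 : BL (fun k => b k - b' k) = 0 := BL_tendsto h
  have h3 : (fun k => b' k + (b k - b' k)) = b := by funext k; ring
  rw [h3, h2, add_zero] at h1
  exact h1

lemma BL_shift {b : ℕ → ℝ} {M : ℝ} (hb : ∀ k, |b k| ≤ M) :
    BL (fun k => b (k + 1)) = BL b := by
  have hM : 0 ≤ M := le_trans (abs_nonneg _) (hb 0)
  have key : Tendsto (fun m => ces (fun k => b (k + 1)) m - ces b m) atTop (𝓝 0) := by
    have hbound : ∀ m, |ces (fun k => b (k + 1)) m - ces b m| ≤ 2 * M / m := by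
      intro m
      rcases Nat.eq_zero_or_pos m with rfl | hm
      · simp [ces]
      · have hm' : (0:ℝ) < (m:ℝ) := by exact_mod_cast hm
        have e1 : ∑ i ∈ Finset.range m, b (i + 1)
            = ∑ i ∈ Finset.range m, b i + b m - b 0 := by
          have := Finset.sum_range_succ' b m
          have e2 : ∑ i ∈ Finset.range (m + 1), b i
              = ∑ i ∈ Finset.range m, b i + b m := Finset.sum_range_succ b m
          linarith [this, e2]
        have e3 : ces (fun k => b (k + 1)) m - ces b m = (m:ℝ)⁻¹ * (b m - b 0) := by
          simp only [ces, e1]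
          ring
        rw [e3, abs_mul, abs_inv, abs_of_pos hm', div_eq_mul_inv, mul_comm (2 * M)]
        refine mul_le_mul_of_nonneg_left ?_ (inv_nonneg.mpr hm'.le)
        calc |b m - b 0| ≤ |b m| + |b 0| := abs_sub _ _
          _ ≤ 2 * M := by linarith [hb m, hb 0]
    refine squeeze_zero_norm (fun m => ?_) (tendsto_const_div_atTop_nhds_zero_nat (2 * M))
    rw [Real.norm_eq_abs]
    exact hbound m
  have ht : Tendsto (fun m => ces b m + (ces (fun k => b (k + 1)) m - ces b m))
      (U : Filter ℕ) (𝓝 (BL b + 0)) :=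
    (BL_spec hb).add (key.mono_left Nat.hyperfilter_le_atTop)
  have e : (fun m => ces b m + (ces (fun k => b (k + 1)) m - ces b m))
      = ces (fun k => b (k + 1)) := by funext m; ring
  rw [e] at ht
  rw [add_zero] at ht
  exact ht.limUnder_eq



def jOf (n₀ m : ℕ) : ℕ := Nat.log 2 (m / n₀)

def wit (Ψ : ℕ → ℝ) (n₀ : ℕ) (m : ℕ) : ℝ :=
  if m < n₀ then Ψ n₀ / n₀
  else (Ψ (2 ^ (jOf n₀ m + 1) * n₀) - Ψ (2 ^ jOf n₀ m * n₀)) / ((2 ^ jOf n₀ m * n₀ : ℕ) : ℝ)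

variable {Ψ : ℕ → ℝ} {n₀ : ℕ}

lemma pmul_pos (hn₀ : 1 ≤ n₀) (j : ℕ) : 0 < 2 ^ j * n₀ := Nat.mul_pos (Nat.two_pow_pos j) hn₀

lemma pmul_one_le (hn₀ : 1 ≤ n₀) (j : ℕ) : 1 ≤ 2 ^ j * n₀ := pmul_pos hn₀ j

lemma pmul_cast_pos (hn₀ : 1 ≤ n₀) (j : ℕ) : (0 : ℝ) < ((2 ^ j * n₀ : ℕ) : ℝ) := by
  exact_mod_cast pmul_pos hn₀ j

lemma pmul_succ (j : ℕ) : 2 ^ (j + 1) * n₀ = 2 * (2 ^ j * n₀) := by ring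

lemma t_mono (hn₀ : 1 ≤ n₀) (hmono' : ∀ m n, 1 ≤ m → m ≤ n → Ψ m ≤ Ψ n) (j : ℕ) : Ψ (2 ^ j * n₀) ≤ Ψ (2 ^ (j + 1) * n₀) := by
  refine hmono' _ _ (pmul_one_le hn₀ j) ?_
  rw [pmul_succ]
  omega

lemma t_one_le (hn₀ : 1 ≤ n₀) (hone : ∀ n, 1 ≤ n → 1 ≤ Ψ n) (j : ℕ) : 1 ≤ Ψ (2 ^ j * n₀) := hone _ (pmul_one_le hn₀ j)

lemma hdub_t (hn₀ : 1 ≤ n₀) (hdub : ∀ n, n₀ ≤ n → Ψ (2 * n) ≤ 3 / 2 * Ψ n) (j : ℕ) : Ψ (2 ^ (j + 1) * n₀) ≤ 3 / 2 * Ψ (2 ^ j * n₀) := by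
  rw [pmul_succ]
  exact hdub _ (Nat.le_mul_of_pos_left n₀ (Nat.two_pow_pos j))

lemma t_growth (hn₀ : 1 ≤ n₀) (hdub : ∀ n, n₀ ≤ n → Ψ (2 * n) ≤ 3 / 2 * Ψ n) (k : ℕ) : ∀ i : ℕ, Ψ (2 ^ (k + i) * n₀) ≤ (3 / 2 : ℝ) ^ i * Ψ (2 ^ k * n₀) := by
  intro i
  induction i with
  | zero => simp
  | succ i ih =>
    have h1 : Ψ (2 ^ (k + i + 1) * n₀) ≤ 3 / 2 * Ψ (2 ^ (k + i) * n₀) := hdub_t hn₀ hdub (k + i)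
    have h2 : (0:ℝ) < 3/2 := by norm_num
    calc Ψ (2 ^ (k + (i + 1)) * n₀) = Ψ (2 ^ (k + i + 1) * n₀) := by ring_nf
      _ ≤ 3 / 2 * Ψ (2 ^ (k + i) * n₀) := h1
      _ ≤ 3 / 2 * ((3 / 2 : ℝ) ^ i * Ψ (2 ^ k * n₀)) := by nlinarith [ih]
      _ = (3 / 2 : ℝ) ^ (i + 1) * Ψ (2 ^ k * n₀) := by ring

lemma jOf_ge (hn₀ : 1 ≤ n₀) {m K : ℕ} (h : 2 ^ K * n₀ ≤ m) : K ≤ jOf n₀ m := by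
  have h1 : 2 ^ K ≤ m / n₀ := (Nat.le_div_iff_mul_le hn₀).mpr h
  have h2 : m / n₀ ≠ 0 := by
    have : 1 ≤ 2 ^ K := Nat.one_le_two_pow
    omega
  exact (Nat.le_log_iff_pow_le (by norm_num) h2).mpr h1

lemma jOf_lb (hn₀ : 1 ≤ n₀) {m : ℕ} (h : n₀ ≤ m) : 2 ^ jOf n₀ m * n₀ ≤ m := by
  have h2 : m / n₀ ≠ 0 := by
    have := (Nat.le_div_iff_mul_le hn₀).mpr (by omega : 1 * n₀ ≤ m)
    omega
  have h1 : 2 ^ jOf n₀ m ≤ m / n₀ := Nat.pow_log_le_self 2 h2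
  calc 2 ^ jOf n₀ m * n₀ ≤ m / n₀ * n₀ := Nat.mul_le_mul_right n₀ h1
    _ ≤ m := Nat.div_mul_le_self m n₀

lemma jOf_ub (hn₀ : 1 ≤ n₀) (m : ℕ) : m < 2 ^ (jOf n₀ m + 1) * n₀ := by
  have h1 : m / n₀ < 2 ^ (jOf n₀ m + 1) := Nat.lt_pow_succ_log_self (by norm_num) (m / n₀)
  exact (Nat.div_lt_iff_lt_mul hn₀).mp h1

lemma wit_eq (hn₀ : 1 ≤ n₀) {j m : ℕ} (h1 : 2 ^ j * n₀ ≤ m) (h2 : m < 2 ^ (j + 1) * n₀) :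
    wit Ψ n₀ m = (Ψ (2 ^ (j + 1) * n₀) - Ψ (2 ^ j * n₀)) / ((2 ^ j * n₀ : ℕ) : ℝ) := by
  have hj : jOf n₀ m = j := by
    refine Nat.log_eq_of_pow_le_of_lt_pow ?_ ?_
    · exact (Nat.le_div_iff_mul_le hn₀).mpr h1
    · exact (Nat.div_lt_iff_lt_mul hn₀).mpr h2
  have hm : ¬ m < n₀ := by
    have : n₀ ≤ 2 ^ j * n₀ := Nat.le_mul_of_pos_left n₀ (Nat.two_pow_pos j)
    omega
  rw [wit, if_neg hm, hj]

variable (hn₀ : 1 ≤ n₀) (hone : ∀ n, 1 ≤ n → 1 ≤ Ψ n)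
  (hmono' : ∀ m n, 1 ≤ m → m ≤ n → Ψ m ≤ Ψ n)
  (hdub : ∀ n, n₀ ≤ n → Ψ (2 * n) ≤ 3 / 2 * Ψ n)

include hn₀ hone hmono' in
lemma wit_nonneg (m : ℕ) : 0 ≤ wit Ψ n₀ m := by
  rw [wit]
  split_ifs with h
  · have h1 : (0:ℝ) ≤ Ψ n₀ := le_trans zero_le_one (hone n₀ hn₀)
    positivity
  · refine div_nonneg ?_ (le_of_lt (pmul_cast_pos hn₀ _))
    have := t_mono hn₀ hmono' (jOf n₀ m)
    linarith

include hn₀ hone hmono' hdub in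
lemma wit_le (m : ℕ) : wit Ψ n₀ m ≤ Ψ n₀ := by
  have hΨ0 : (1:ℝ) ≤ Ψ n₀ := hone n₀ hn₀
  have hn₀' : (1:ℝ) ≤ (n₀ : ℝ) := by exact_mod_cast hn₀
  rw [wit]
  split_ifs with h
  · exact div_le_self (by linarith) hn₀'
  · set j := jOf n₀ m with hj
    have h1 : Ψ (2 ^ (j + 1) * n₀) - Ψ (2 ^ j * n₀) ≤ 1 / 2 * Ψ (2 ^ j * n₀) := by
      have := hdub_t hn₀ hdub j
      linarith
    have h2 : Ψ (2 ^ j * n₀) ≤ (3 / 2 : ℝ) ^ j * Ψ n₀ := by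
      have := t_growth hn₀ hdub 0 j
      simpa using this
    have h3 : ((3:ℝ) / 2) ^ j ≤ 2 ^ j := by
      apply pow_le_pow_left₀ (by norm_num) (by norm_num)
    have h4 : (0:ℝ) < ((2 ^ j * n₀ : ℕ) : ℝ) := pmul_cast_pos hn₀ j
    have h5 : ((2 ^ j * n₀ : ℕ) : ℝ) = 2 ^ j * (n₀ : ℝ) := by push_cast; ring
    rw [div_le_iff₀ h4]
    have h6 : (1:ℝ) * 1 ≤ 2 ^ j * (n₀:ℝ) := by
      have : (1:ℝ) ≤ 2 ^ j := one_le_pow₀ (by norm_num : (1:ℝ) ≤ 2)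
      nlinarith
    have h7 : (0:ℝ) ≤ Ψ n₀ := by linarith
    have h8 : Ψ (2 ^ j * n₀) ≤ 2 ^ j * Ψ n₀ := by nlinarith
    rw [h5]
    nlinarith [t_one_le hn₀ hone j]

include hn₀ in
lemma sum_wit : ∀ k : ℕ, ∑ m ∈ Finset.range (2 ^ k * n₀), wit Ψ n₀ m = Ψ (2 ^ k * n₀) := by
  intro k
  induction k with
  | zero =>
    have he : ∀ m ∈ Finset.range (2 ^ 0 * n₀), wit Ψ n₀ m = Ψ n₀ / n₀ := by
      intro m hm
      rw [Finset.mem_range] at hm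
      rw [wit, if_pos (by omega)]
    rw [Finset.sum_congr rfl he, Finset.sum_const, Finset.card_range]
    have : (n₀:ℝ) ≠ 0 := by positivity
    simp only [one_mul, pow_zero]
    rw [nsmul_eq_mul]
    field_simp
  | succ k ih =>
    have hle1 : 2 ^ k * n₀ ≤ 2 ^ (k + 1) * n₀ := by
      have : (2:ℕ) ^ k ≤ 2 ^ (k + 1) := Nat.pow_le_pow_right (by norm_num) (by omega)
      exact Nat.mul_le_mul_right n₀ this
    have hsplit : ∑ m ∈ Finset.range (2 ^ k * n₀), wit Ψ n₀ m
        + ∑ m ∈ Finset.Ico (2 ^ k * n₀) (2 ^ (k + 1) * n₀), wit Ψ n₀ m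
        = ∑ m ∈ Finset.range (2 ^ (k + 1) * n₀), wit Ψ n₀ m := by
      simp only [Finset.range_eq_Ico]
      exact Finset.sum_Ico_consecutive _ (Nat.zero_le _) hle1
    have hval : ∀ m ∈ Finset.Ico (2 ^ k * n₀) (2 ^ (k + 1) * n₀),
        wit Ψ n₀ m = (Ψ (2 ^ (k + 1) * n₀) - Ψ (2 ^ k * n₀)) / ((2 ^ k * n₀ : ℕ) : ℝ) := by
      intro m hm
      rw [Finset.mem_Ico] at hm
      exact wit_eq hn₀ hm.1 hm.2
    have hcard : (Finset.Ico (2 ^ k * n₀) (2 ^ (k + 1) * n₀)).card = 2 ^ k * n₀ := by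
      rw [Nat.card_Ico]
      have : 2 ^ (k + 1) * n₀ = 2 * (2 ^ k * n₀) := by ring
      omega
    have hsum2 : ∑ m ∈ Finset.Ico (2 ^ k * n₀) (2 ^ (k + 1) * n₀), wit Ψ n₀ m
        = Ψ (2 ^ (k + 1) * n₀) - Ψ (2 ^ k * n₀) := by
      rw [Finset.sum_congr rfl hval, Finset.sum_const, hcard, nsmul_eq_mul]
      have h4 : ((2 ^ k * n₀ : ℕ) : ℝ) ≠ 0 := ne_of_gt (pmul_cast_pos hn₀ k)
      field_simp
    rw [← hsplit, ih, hsum2]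
    ring

include hn₀ hone hmono' hdub in
lemma sum_wit_le : ∀ (K : ℕ) (A : Finset ℕ), A.card ≤ 2 ^ K * n₀ →
    ∑ m ∈ A, wit Ψ n₀ m ≤ 3 * Ψ (2 ^ K * n₀) := by
  classical
  intro K A hA
  have hwn : ∀ m, 0 ≤ wit Ψ n₀ m := wit_nonneg hn₀ hone hmono'
  have htK1 : (1:ℝ) ≤ Ψ (2 ^ K * n₀) := t_one_le hn₀ hone K
  have hsplit := Finset.sum_filter_add_sum_filter_not A (fun m => m < 2 ^ K * n₀) (wit Ψ n₀)
  set A1 := A.filter (fun m => m < 2 ^ K * n₀) with hA1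
  set A2 := A.filter (fun m => ¬ m < 2 ^ K * n₀) with hA2
  have h1 : ∑ m ∈ A1, wit Ψ n₀ m ≤ Ψ (2 ^ K * n₀) := by
    have hsub : A1 ⊆ Finset.range (2 ^ K * n₀) := by
      intro m hm
      rw [hA1, Finset.mem_filter] at hm
      exact Finset.mem_range.mpr hm.2
    calc ∑ m ∈ A1, wit Ψ n₀ m ≤ ∑ m ∈ Finset.range (2 ^ K * n₀), wit Ψ n₀ m :=
          Finset.sum_le_sum_of_subset_of_nonneg hsub (fun m _ _ => hwn m)
      _ = Ψ (2 ^ K * n₀) := sum_wit hn₀ K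
  have h2 : ∑ m ∈ A2, wit Ψ n₀ m ≤ 2 * Ψ (2 ^ K * n₀) := by
    set L := jOf n₀ (A.sup id) + 1 with hL
    have hmaps : ∀ m ∈ A2, jOf n₀ m ∈ Finset.Ico K L := by
      intro m hm
      rw [hA2, Finset.mem_filter] at hm
      have hm2K : 2 ^ K * n₀ ≤ m := le_of_not_gt hm.2
      rw [Finset.mem_Ico]
      constructor
      · exact jOf_ge hn₀ hm2K
      · have hsup : m ≤ A.sup id := Finset.le_sup (f := id) hm.1
        have : jOf n₀ m ≤ jOf n₀ (A.sup id) :=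
          Nat.log_mono_right (Nat.div_le_div_right hsup)
        omega
    have hfib := Finset.sum_fiberwise_of_maps_to hmaps (wit Ψ n₀)
    rw [← hfib]
    have hinner : ∀ j ∈ Finset.Ico K L,
        ∑ m ∈ A2.filter (fun m => jOf n₀ m = j), wit Ψ n₀ m
        ≤ ((2 ^ K * n₀ : ℕ) : ℝ) *
          ((Ψ (2 ^ (j + 1) * n₀) - Ψ (2 ^ j * n₀)) / ((2 ^ j * n₀ : ℕ) : ℝ)) := by
      intro j hj
      set v := (Ψ (2 ^ (j + 1) * n₀) - Ψ (2 ^ j * n₀)) / ((2 ^ j * n₀ : ℕ) : ℝ) with hv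
      have hv0 : 0 ≤ v := by
        rw [hv]
        refine div_nonneg ?_ (le_of_lt (pmul_cast_pos hn₀ j))
        linarith [t_mono hn₀ hmono' j]
      have hval : ∀ m ∈ A2.filter (fun m => jOf n₀ m = j), wit Ψ n₀ m ≤ v := by
        intro m hm
        rw [Finset.mem_filter, hA2, Finset.mem_filter] at hm
        obtain ⟨⟨hmA, hmlt⟩, hjm⟩ := hm
        have hmn₀ : n₀ ≤ m := by
          have h5 : n₀ ≤ 2 ^ K * n₀ := Nat.le_mul_of_pos_left n₀ (Nat.two_pow_pos K)
          omega
        have hlb := jOf_lb hn₀ hmn₀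
        have hub := jOf_ub hn₀ (m := m)
        rw [hjm] at hlb hub
        rw [wit_eq hn₀ hlb hub, ← hv]
      calc ∑ m ∈ A2.filter (fun m => jOf n₀ m = j), wit Ψ n₀ m
          ≤ (A2.filter (fun m => jOf n₀ m = j)).card • v :=
            Finset.sum_le_card_nsmul _ _ v hval
        _ = ((A2.filter (fun m => jOf n₀ m = j)).card : ℝ) * v := nsmul_eq_mul _ _
        _ ≤ ((2 ^ K * n₀ : ℕ) : ℝ) * v := by
            refine mul_le_mul_of_nonneg_right ?_ hv0
            have hc1 : (A2.filter (fun m => jOf n₀ m = j)).card ≤ A.card := by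
              refine Finset.card_le_card ?_
              intro m hm
              rw [Finset.mem_filter, hA2, Finset.mem_filter] at hm
              exact hm.1.1
            exact_mod_cast le_trans hc1 hA
    have hgeom : ∑ j ∈ Finset.Ico K L, ((2 ^ K * n₀ : ℕ) : ℝ) *
        ((Ψ (2 ^ (j + 1) * n₀) - Ψ (2 ^ j * n₀)) / ((2 ^ j * n₀ : ℕ) : ℝ))
        ≤ 2 * Ψ (2 ^ K * n₀) := by
      rw [Finset.sum_Ico_eq_sum_range]
      have hterm : ∀ i : ℕ, ((2 ^ K * n₀ : ℕ) : ℝ) *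
          ((Ψ (2 ^ (K + i + 1) * n₀) - Ψ (2 ^ (K + i) * n₀)) / ((2 ^ (K + i) * n₀ : ℕ) : ℝ))
          ≤ 1 / 2 * (3 / 4 : ℝ) ^ i * Ψ (2 ^ K * n₀) := by
        intro i
        have hnum : Ψ (2 ^ (K + i + 1) * n₀) - Ψ (2 ^ (K + i) * n₀)
            ≤ 1 / 2 * Ψ (2 ^ (K + i) * n₀) := by
          have := hdub_t hn₀ hdub (K + i)
          linarith
        have htg : Ψ (2 ^ (K + i) * n₀) ≤ (3 / 2 : ℝ) ^ i * Ψ (2 ^ K * n₀) :=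
          t_growth hn₀ hdub K i
        have hden : ((2 ^ (K + i) * n₀ : ℕ) : ℝ) = 2 ^ K * 2 ^ i * (n₀ : ℝ) := by
          push_cast
          rw [pow_add]
        have hKcast : ((2 ^ K * n₀ : ℕ) : ℝ) = 2 ^ K * (n₀ : ℝ) := by push_cast; ring
        have h2i : (0:ℝ) < 2 ^ i := by positivity
        have h2K : (0:ℝ) < 2 ^ K := by positivity
        have hn0r : (0:ℝ) < (n₀ : ℝ) := by exact_mod_cast hn₀
        have htpos : (0:ℝ) ≤ Ψ (2 ^ K * n₀) := by linarith
        rw [hden, hKcast]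
        rw [div_eq_mul_inv, mul_inv, mul_inv]
        have e : 2 ^ K * (n₀:ℝ) * ((Ψ (2 ^ (K + i + 1) * n₀) - Ψ (2 ^ (K + i) * n₀)) *
            (((2:ℝ) ^ K)⁻¹ * ((2:ℝ) ^ i)⁻¹ * ((n₀:ℝ))⁻¹))
            = (Ψ (2 ^ (K + i + 1) * n₀) - Ψ (2 ^ (K + i) * n₀)) * ((2:ℝ) ^ i)⁻¹ := by
          field_simp
        rw [e]
        have h34 : ((3:ℝ)/4) ^ i = (3/2 : ℝ) ^ i * ((2:ℝ) ^ i)⁻¹ := by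
          have e34 : (3/4 : ℝ) = (3/2) / 2 := by norm_num
          rw [e34, div_pow, div_eq_mul_inv]
        have hnn : (0:ℝ) ≤ Ψ (2 ^ (K + i + 1) * n₀) - Ψ (2 ^ (K + i) * n₀) := by
          linarith [t_mono hn₀ hmono' (K + i)]
        calc (Ψ (2 ^ (K + i + 1) * n₀) - Ψ (2 ^ (K + i) * n₀)) * ((2:ℝ) ^ i)⁻¹
            ≤ (1 / 2 * ((3 / 2 : ℝ) ^ i * Ψ (2 ^ K * n₀))) * ((2:ℝ) ^ i)⁻¹ := by
              refine mul_le_mul_of_nonneg_right ?_ (inv_nonneg.mpr h2i.le)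
              nlinarith
          _ = 1 / 2 * (3 / 4 : ℝ) ^ i * Ψ (2 ^ K * n₀) := by
              rw [h34]; ring
      have hgs : ∑ i ∈ Finset.range (L - K), (1 / 2 * (3 / 4 : ℝ) ^ i * Ψ (2 ^ K * n₀))
          ≤ 2 * Ψ (2 ^ K * n₀) := by
        have hsum34 : ∑ i ∈ Finset.range (L - K), (3 / 4 : ℝ) ^ i ≤ 4 := by
          have hgeq := geom_sum_eq (show (3/4 : ℝ) ≠ 1 by norm_num) (L - K)
          rw [hgeq]
          have hp : (0:ℝ) ≤ (3/4 : ℝ) ^ (L - K) := by positivity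
          have hp1 : (3/4 : ℝ) ^ (L - K) ≤ 1 := pow_le_one₀ (by norm_num) (by norm_num)
          have : ((3/4 : ℝ) ^ (L - K) - 1) / (3/4 - 1) = 4 * (1 - (3/4 : ℝ) ^ (L - K)) := by
            norm_num
            ring
          rw [this]
          nlinarith
        calc ∑ i ∈ Finset.range (L - K), (1 / 2 * (3 / 4 : ℝ) ^ i * Ψ (2 ^ K * n₀))
            = 1 / 2 * Ψ (2 ^ K * n₀) * ∑ i ∈ Finset.range (L - K), (3 / 4 : ℝ) ^ i := by
              rw [Finset.mul_sum]
              exact Finset.sum_congr rfl fun i _ => by ring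
          _ ≤ 1 / 2 * Ψ (2 ^ K * n₀) * 4 := by
              refine mul_le_mul_of_nonneg_left hsum34 (by positivity)
          _ = 2 * Ψ (2 ^ K * n₀) := by ring
      calc ∑ i ∈ Finset.range (L - K), (((2 ^ K * n₀ : ℕ) : ℝ) *
            ((Ψ (2 ^ (K + i + 1) * n₀) - Ψ (2 ^ (K + i) * n₀)) / ((2 ^ (K + i) * n₀ : ℕ) : ℝ)))
          ≤ ∑ i ∈ Finset.range (L - K), (1 / 2 * (3 / 4 : ℝ) ^ i * Ψ (2 ^ K * n₀)) :=
            Finset.sum_le_sum fun i _ => hterm i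
        _ ≤ 2 * Ψ (2 ^ K * n₀) := hgs
    calc ∑ j ∈ Finset.Ico K L, ∑ m ∈ A2.filter (fun m => jOf n₀ m = j), wit Ψ n₀ m
        ≤ ∑ j ∈ Finset.Ico K L, (((2 ^ K * n₀ : ℕ) : ℝ) *
          ((Ψ (2 ^ (j + 1) * n₀) - Ψ (2 ^ j * n₀)) / ((2 ^ j * n₀ : ℕ) : ℝ))) :=
          Finset.sum_le_sum hinner
      _ ≤ 2 * Ψ (2 ^ K * n₀) := hgeom
  linarith [hsplit]


end
end SymAux

open SymAux

-- small helper
lemma max_identity (s t : ℝ) :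
    max (s + t) 0 + max (-s) 0 + max (-t) 0
      = max s 0 + max t 0 + max (-(s + t)) 0 := by
  have hmax : ∀ u : ℝ, max u 0 = (u + |u|) / 2 := by
    intro u
    rcases le_total u 0 with h | h
    · rw [max_eq_right h, abs_of_nonpos h]; ring
    · rw [max_eq_left h, abs_of_nonneg h]; ring
  simp only [hmax, abs_neg]
  ring

lemma abs_max_le (t : ℝ) : |max t 0| ≤ |t| := by
  rcases le_total t 0 with h | h
  · rw [max_eq_right h]; simp [abs_nonneg]
  · rw [max_eq_left h]

lemma max_smul_eq (c t : ℝ) (hc : 0 ≤ c) : max (c * t) 0 = c * max t 0 := by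
  rcases le_total t 0 with h | h
  · rw [max_eq_right h, max_eq_right (by nlinarith : c * t ≤ 0), mul_zero]
  · rw [max_eq_left h, max_eq_left (by positivity : 0 ≤ c * t)]


/-- If `Ψ(1) = 1`, `Ψ` increases to `∞`, `Ψ(n)/n → 0` and `Ψ(2n)/Ψ(n) → 1`, then the
Marcinkiewicz space `m_Ψ` admits a nonzero continuous symmetric linear functional. -/
theorem exists_symmetric_functional_on_marcinkiewicz (Ψ : ℕ → ℝ)
    (hΨ1 : Ψ 1 = 1)
    (hmono : ∀ m n : ℕ, 1 ≤ m → m < n → Ψ m < Ψ n)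
    (htop : Tendsto Ψ atTop atTop)
    (hquot : Tendsto (fun n : ℕ => Ψ n / n) atTop (nhds 0))
    (hdouble : Tendsto (fun n : ℕ => Ψ (2 * n) / Ψ n) atTop (nhds 1)) :
    let M : Set (ℕ → ℝ) := {x | (∃ C, ∀ n, |x n| ≤ C) ∧
      ∃ C, ∀ n : ℕ, (∑ k ∈ Finset.range (n + 1), dstar x k) / Ψ (n + 1) ≤ C}
    let Mnorm : (ℕ → ℝ) → ℝ :=
      fun x => ⨆ n : ℕ, (∑ k ∈ Finset.range (n + 1), dstar x k) / Ψ (n + 1)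
    ∃ γ : (ℕ → ℝ) → ℝ,
      (∀ x ∈ M, ∀ y ∈ M, γ (x + y) = γ x + γ y) ∧
      (∀ (c : ℝ), ∀ x ∈ M, γ (c • x) = c * γ x) ∧
      (∃ C : ℝ, ∀ x ∈ M, |γ x| ≤ C * Mnorm x) ∧
      (∀ x ∈ M, ∀ σ : Equiv.Perm ℕ, γ (x ∘ σ) = γ x) ∧
      (∃ x ∈ M, γ x ≠ 0) := by
  intro M Mnorm
  classical
  -- basic facts about Ψ
  have hΨone : ∀ n, 1 ≤ n → 1 ≤ Ψ n := by
    intro n hn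
    rcases eq_or_lt_of_le hn with h | h
    · rw [← h, hΨ1]
    · rw [← hΨ1]; exact (hmono 1 n le_rfl h).le
  have hΨpos : ∀ n, 1 ≤ n → (0:ℝ) < Ψ n := fun n hn => lt_of_lt_of_le one_pos (hΨone n hn)
  have hΨmono' : ∀ m n, 1 ≤ m → m ≤ n → Ψ m ≤ Ψ n := by
    intro m n hm hmn
    rcases eq_or_lt_of_le hmn with h | h
    · rw [h]
    · exact (hmono m n hm h).le
  -- choose n₀
  obtain ⟨N, hN⟩ : ∃ N : ℕ, ∀ n ≥ N, Ψ (2 * n) / Ψ n ≤ 3 / 2 := by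
    have h2 : ∀ᶠ n : ℕ in atTop, Ψ (2 * n) / Ψ n ≤ 3 / 2 :=
      hdouble.eventually (eventually_le_nhds (by norm_num : (1:ℝ) < 3 / 2))
    exact eventually_atTop.mp h2
  set n₀ : ℕ := max N 1 with hn₀def
  have hn₀ : 1 ≤ n₀ := le_max_right N 1
  have hdub : ∀ n, n₀ ≤ n → Ψ (2 * n) ≤ 3 / 2 * Ψ n := by
    intro n hn
    have h1 : 1 ≤ n := le_trans hn₀ hn
    have h2 := hN n (le_trans (le_max_left N 1) hn)
    rw [div_le_iff₀ (hΨpos n h1)] at h2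
    linarith
  have hpm1 : ∀ k : ℕ, 1 ≤ 2 ^ k * n₀ := fun k => pmul_one_le hn₀ k
  have htpos : ∀ k : ℕ, (0:ℝ) < Ψ (2 ^ k * n₀) := fun k => hΨpos _ (hpm1 k)
  have ht1 : ∀ k : ℕ, (1:ℝ) ≤ Ψ (2 ^ k * n₀) := fun k => hΨone _ (hpm1 k)
  -- the dilation sequence and its ratio
  set r : ℕ → ℝ := fun k => Ψ (2 ^ (k + 1) * n₀) / Ψ (2 ^ k * n₀) with hr
  have hr_bound : ∀ k, 0 ≤ r k ∧ r k ≤ 3 / 2 := by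
    intro k
    constructor
    · exact div_nonneg (htpos (k + 1)).le (htpos k).le
    · rw [hr]
      rw [div_le_iff₀ (htpos k)]
      have := hdub_t hn₀ hdub k
      linarith
  have hr_lim : Tendsto r atTop (𝓝 1) := by
    have hmk : Tendsto (fun k : ℕ => 2 ^ k * n₀) atTop atTop := by
      apply tendsto_atTop_mono (fun k => ?_) tendsto_id
      calc (id k : ℕ) = k := rfl
        _ ≤ 2 ^ k := (Nat.lt_two_pow_self (n := k)).le
        _ ≤ 2 ^ k * n₀ := Nat.le_mul_of_pos_right _ hn₀
    have := hdouble.comp hmk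
    refine this.congr fun k => ?_
    simp only [Function.comp_apply, hr]
    congr 2
    ring
  -- the functional
  set a : (ℕ → ℝ) → ℕ → ℝ := fun x k => Ssum x (2 ^ k * n₀) / Ψ (2 ^ k * n₀) with ha
  set φ : (ℕ → ℝ) → ℝ := fun x => BL (a x) with hφ
  set pos : (ℕ → ℝ) → ℕ → ℝ := fun x m => max (x m) 0 with hpos
  set neg : (ℕ → ℝ) → ℕ → ℝ := fun x m => max (-(x m)) 0 with hneg
  -- basic a facts
  have a_nonneg : ∀ (x : ℕ → ℝ) (C : ℝ), (∀ m, |x m| ≤ C) → ∀ k, 0 ≤ a x k := by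
    intro x C hx k
    exact div_nonneg (Ssum_nonneg hx _) (htpos k).le
  have a_le_of_bound : ∀ (x : ℕ → ℝ) (C : ℝ),
      (∀ n : ℕ, Ssum x (n + 1) / Ψ (n + 1) ≤ C) → ∀ k, a x k ≤ C := by
    intro x C hx k
    have he : 2 ^ k * n₀ = (2 ^ k * n₀ - 1) + 1 := (Nat.succ_pred_eq_of_pos (hpm1 k)).symm
    have := hx (2 ^ k * n₀ - 1)
    rw [← he] at this
    exact this
  have a_add_le : ∀ (u v : ℕ → ℝ) (Cu Cv : ℝ), (∀ m, |u m| ≤ Cu) → (∀ m, |v m| ≤ Cv) →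
      ∀ k, a (u + v) k ≤ a u k + a v k := by
    intro u v Cu Cv hu hv k
    rw [ha]
    simp only
    rw [← add_div]
    gcongr
    · exact (htpos k).le
    · exact Ssum_add_le hu hv _
  -- cone additivity of φ
  have phi_cone_add : ∀ (u v : ℕ → ℝ) (Cu Cv Bu Bv : ℝ),
      (∀ m, |u m| ≤ Cu) → (∀ m, |v m| ≤ Cv) →
      (∀ m, 0 ≤ u m) → (∀ m, 0 ≤ v m) →
      (∀ k, a u k ≤ Bu) → (∀ k, a v k ≤ Bv) →
      φ (u + v) = φ u + φ v := by
    intro u v Cu Cv Bu Bv hu hv hu0 hv0 hau hav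
    have huv : ∀ m, |(u + v) m| ≤ Cu + Cv := fun m =>
      le_trans (abs_add_le _ _) (add_le_add (hu m) (hv m))
    have hau0 : ∀ k, 0 ≤ a u k := a_nonneg u Cu hu
    have hav0 : ∀ k, 0 ≤ a v k := a_nonneg v Cv hv
    have hauv0 : ∀ k, 0 ≤ a (u + v) k := a_nonneg _ (Cu + Cv) huv
    have hBu0 : 0 ≤ Bu := le_trans (hau0 0) (hau 0)
    have hBv0 : 0 ≤ Bv := le_trans (hav0 0) (hav 0)
    have hauabs : ∀ k, |a u k| ≤ Bu := fun k => by
      rw [abs_of_nonneg (hau0 k)]; exact hau k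
    have havabs : ∀ k, |a v k| ≤ Bv := fun k => by
      rw [abs_of_nonneg (hav0 k)]; exact hav k
    have hsub : ∀ k, a (u + v) k ≤ a u k + a v k := a_add_le u v Cu Cv hu hv
    have hauvabs : ∀ k, |a (u + v) k| ≤ Bu + Bv := fun k => by
      rw [abs_of_nonneg (hauv0 k)]
      exact le_trans (hsub k) (add_le_add (hau k) (hav k))
    have hsumabs : ∀ k, |a u k + a v k| ≤ Bu + Bv := fun k => by
      rw [abs_of_nonneg (add_nonneg (hau0 k) (hav0 k))]
      exact add_le_add (hau k) (hav k)
    have hsup : ∀ k, a u k + a v k ≤ a (u + v) (k + 1) * r k := by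
      intro k
      have he : a (u + v) (k + 1) * r k = Ssum (u + v) (2 ^ (k + 1) * n₀) / Ψ (2 ^ k * n₀) := by
        rw [ha, hr]
        simp only
        rw [div_mul_div_comm, mul_comm (Ψ (2 ^ (k + 1) * n₀))]
        rw [mul_div_mul_right _ _ (ne_of_gt (htpos (k + 1)))]
      rw [he, ha]
      simp only
      rw [← add_div]
      gcongr
      · exact (htpos k).le
      · have h2 : 2 ^ (k + 1) * n₀ = 2 * (2 ^ k * n₀) := by ring
        rw [h2]
        exact Ssum_superadd hu hv hu0 hv0 _
    have hprod_abs : ∀ k, |a (u + v) (k + 1) * r k| ≤ (Bu + Bv) * (3 / 2) := by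
      intro k
      rw [abs_mul, abs_of_nonneg (hauv0 (k + 1)), abs_of_nonneg (hr_bound k).1]
      have h1 : a (u + v) (k + 1) ≤ Bu + Bv :=
        le_trans (hsub (k + 1)) (add_le_add (hau (k + 1)) (hav (k + 1)))
      exact mul_le_mul h1 (hr_bound k).2 (hr_bound k).1 (by linarith)
    have e1 : BL (a (u + v)) ≤ BL (fun k => a u k + a v k) :=
      BL_le hauvabs hsumabs hsub
    have e2 : BL (fun k => a u k + a v k) = BL (a u) + BL (a v) := BL_add hauabs havabs
    have e3 : BL (fun k => a u k + a v k) ≤ BL (fun k => a (u + v) (k + 1) * r k) :=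
      BL_le hsumabs hprod_abs hsup
    have e4 : BL (fun k => a (u + v) (k + 1) * r k) = BL (fun k => a (u + v) (k + 1)) := by
      refine BL_congr_null hprod_abs (fun k => hauvabs (k + 1)) ?_
      have hg : Tendsto (fun k => (Bu + Bv) * |r k - 1|) atTop (𝓝 0) := by
        have h1 : Tendsto (fun k => r k - 1) atTop (𝓝 0) := by
          have := hr_lim.sub_const 1
          simpa using this
        have h2 : Tendsto (fun k => |r k - 1|) atTop (𝓝 0) := by
          have := h1.abs
          simpa using this
        have := h2.const_mul (Bu + Bv)
        simpa using this
      refine squeeze_zero_norm (fun k => ?_) hg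
      rw [Real.norm_eq_abs]
      have : a (u + v) (k + 1) * r k - a (u + v) (k + 1) = a (u + v) (k + 1) * (r k - 1) := by
        ring
      rw [this, abs_mul]
      exact mul_le_mul_of_nonneg_right (hauvabs (k + 1)) (abs_nonneg _)
    have e5 : BL (fun k => a (u + v) (k + 1)) = BL (a (u + v)) := BL_shift hauvabs
    have : BL (a u) + BL (a v) ≤ BL (a (u + v)) := by
      rw [← e2]
      calc BL (fun k => a u k + a v k) ≤ BL (fun k => a (u + v) (k + 1) * r k) := e3
        _ = BL (a (u + v)) := by rw [e4, e5]
    have h2 : BL (a (u + v)) ≤ BL (a u) + BL (a v) := by rw [← e2]; exact e1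
    rw [hφ]
    simp only
    linarith
  -- φ on nonneg scalar multiples
  have phi_cone_smul : ∀ (u : ℕ → ℝ) (Cu Bu : ℝ), (∀ m, |u m| ≤ Cu) →
      (∀ k, a u k ≤ Bu) → ∀ c : ℝ, 0 ≤ c → φ (c • u) = c * φ u := by
    intro u Cu Bu hu hau c hc
    have hau0 : ∀ k, 0 ≤ a u k := a_nonneg u Cu hu
    have hBu0 : 0 ≤ Bu := le_trans (hau0 0) (hau 0)
    have hauabs : ∀ k, |a u k| ≤ Bu := fun k => by
      rw [abs_of_nonneg (hau0 k)]; exact hau k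
    have he : a (c • u) = fun k => c * a u k := by
      funext k
      rw [ha]
      simp only
      rw [Ssum_smul hu c, abs_of_nonneg hc, mul_div_assoc]
    rw [hφ]
    simp only
    rw [he, BL_smul hauabs c]
  -- bounds on φ
  have phi_nonneg : ∀ (u : ℕ → ℝ) (Cu Bu : ℝ), (∀ m, |u m| ≤ Cu) →
      (∀ k, a u k ≤ Bu) → 0 ≤ φ u := by
    intro u Cu Bu hu hau
    have hau0 : ∀ k, 0 ≤ a u k := a_nonneg u Cu hu
    have hauabs : ∀ k, |a u k| ≤ Bu := fun k => by
      rw [abs_of_nonneg (hau0 k)]; exact hau k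
    exact BL_const_le hauabs hau0
  have phi_le : ∀ (u : ℕ → ℝ) (Cu Bu : ℝ), (∀ m, |u m| ≤ Cu) →
      (∀ k, a u k ≤ Bu) → φ u ≤ Bu := by
    intro u Cu Bu hu hau
    have hau0 : ∀ k, 0 ≤ a u k := a_nonneg u Cu hu
    have hauabs : ∀ k, |a u k| ≤ Bu := fun k => by
      rw [abs_of_nonneg (hau0 k)]; exact hau k
    exact BL_le_const hauabs hau
  -- facts about pos and neg parts for members of M
  have hpos_bdd : ∀ (x : ℕ → ℝ) (C : ℝ), (∀ m, |x m| ≤ C) → ∀ m, |pos x m| ≤ C :=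
    fun x C hx m => le_trans (abs_max_le (x m)) (hx m)
  have hneg_bdd : ∀ (x : ℕ → ℝ) (C : ℝ), (∀ m, |x m| ≤ C) → ∀ m, |neg x m| ≤ C :=
    fun x C hx m => le_trans (le_trans (abs_max_le (-(x m))) (le_of_eq (abs_neg _))) (hx m)
  have hpos_abs_le : ∀ (x : ℕ → ℝ) (m : ℕ), |pos x m| ≤ |x m| := fun x m => abs_max_le (x m)
  have hneg_abs_le : ∀ (x : ℕ → ℝ) (m : ℕ), |neg x m| ≤ |x m| := fun x m =>
    le_trans (abs_max_le (-(x m))) (le_of_eq (abs_neg _))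
  have hpos_nonneg : ∀ (x : ℕ → ℝ) (m : ℕ), 0 ≤ pos x m := fun x m => le_max_right _ _
  have hneg_nonneg : ∀ (x : ℕ → ℝ) (m : ℕ), 0 ≤ neg x m := fun x m => le_max_right _ _
  have a_pos_le : ∀ (x : ℕ → ℝ) (C B : ℝ), (∀ m, |x m| ≤ C) →
      (∀ k, a x k ≤ B) → ∀ k, a (pos x) k ≤ B := by
    intro x C B hx hax k
    refine le_trans ?_ (hax k)
    rw [ha]
    simp only
    gcongr
    · exact (htpos k).le
    · exact Ssum_mono_abs hx (hpos_abs_le x) _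
  have a_neg_le : ∀ (x : ℕ → ℝ) (C B : ℝ), (∀ m, |x m| ≤ C) →
      (∀ k, a x k ≤ B) → ∀ k, a (neg x) k ≤ B := by
    intro x C B hx hax k
    refine le_trans ?_ (hax k)
    rw [ha]
    simp only
    gcongr
    · exact (htpos k).le
    · exact Ssum_mono_abs hx (hneg_abs_le x) _
  -- membership unpacking
  have hMx : ∀ x ∈ M, (∃ C, ∀ m, |x m| ≤ C) ∧ ∃ C, ∀ n : ℕ, Ssum x (n + 1) / Ψ (n + 1) ≤ C :=
    fun x hx => hx
  -- the functional
  refine ⟨fun x => φ (pos x) - φ (neg x), ?_, ?_, ?_, ?_, ?_⟩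
  · -- additivity
    intro x hx y hy
    show φ (pos (x + y)) - φ (neg (x + y)) = (φ (pos x) - φ (neg x)) + (φ (pos y) - φ (neg y))
    obtain ⟨⟨Cx, hCx⟩, ⟨Bx, hBx⟩⟩ := hMx x hx
    obtain ⟨⟨Cy, hCy⟩, ⟨By', hBy⟩⟩ := hMx y hy
    have hax : ∀ k, a x k ≤ Bx := a_le_of_bound x Bx hBx
    have hay : ∀ k, a y k ≤ By' := a_le_of_bound y By' hBy
    have haxy : ∀ k, a (x + y) k ≤ Bx + By' := fun k =>
      le_trans (a_add_le x y Cx Cy hCx hCy k) (add_le_add (hax k) (hay k))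
    have hCxy : ∀ m, |(x + y) m| ≤ Cx + Cy := fun m =>
      le_trans (abs_add_le _ _) (add_le_add (hCx m) (hCy m))
    -- identity of functions
    have hid : pos (x + y) + neg x + neg y = pos x + pos y + neg (x + y) := by
      funext m
      simp only [Pi.add_apply, hpos, hneg]
      exact max_identity (x m) (y m)
    -- φ of triple sums
    have phi3 : ∀ (u v w : ℕ → ℝ) (Cu Cv Cw Bu Bv Bw : ℝ),
        (∀ m, |u m| ≤ Cu) → (∀ m, |v m| ≤ Cv) → (∀ m, |w m| ≤ Cw) →
        (∀ m, 0 ≤ u m) → (∀ m, 0 ≤ v m) → (∀ m, 0 ≤ w m) →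
        (∀ k, a u k ≤ Bu) → (∀ k, a v k ≤ Bv) → (∀ k, a w k ≤ Bw) →
        φ (u + v + w) = φ u + φ v + φ w := by
      intro u v w Cu Cv Cw Bu Bv Bw hu hv hw hu0 hv0 hw0 hau hav haw
      have huv : ∀ m, |(u + v) m| ≤ Cu + Cv := fun m =>
        le_trans (abs_add_le _ _) (add_le_add (hu m) (hv m))
      have huv0 : ∀ m, 0 ≤ (u + v) m := fun m => add_nonneg (hu0 m) (hv0 m)
      have hauv : ∀ k, a (u + v) k ≤ Bu + Bv := fun k =>
        le_trans (a_add_le u v Cu Cv hu hv k) (add_le_add (hau k) (hav k))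
      rw [phi_cone_add (u + v) w (Cu + Cv) Cw (Bu + Bv) Bw huv hw huv0 hw0 hauv haw,
        phi_cone_add u v Cu Cv Bu Bv hu hv hu0 hv0 hau hav]
    have L1 : φ (pos (x + y) + neg x + neg y)
        = φ (pos (x + y)) + φ (neg x) + φ (neg y) :=
      phi3 _ _ _ (Cx + Cy) Cx Cy (Bx + By') Bx By'
        (hpos_bdd _ _ hCxy) (hneg_bdd _ _ hCx) (hneg_bdd _ _ hCy)
        (hpos_nonneg _) (hneg_nonneg _) (hneg_nonneg _)
        (a_pos_le _ _ _ hCxy haxy) (a_neg_le _ _ _ hCx hax) (a_neg_le _ _ _ hCy hay)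
    have L2 : φ (pos x + pos y + neg (x + y))
        = φ (pos x) + φ (pos y) + φ (neg (x + y)) :=
      phi3 _ _ _ Cx Cy (Cx + Cy) Bx By' (Bx + By')
        (hpos_bdd _ _ hCx) (hpos_bdd _ _ hCy) (hneg_bdd _ _ hCxy)
        (hpos_nonneg _) (hpos_nonneg _) (hneg_nonneg _)
        (a_pos_le _ _ _ hCx hax) (a_pos_le _ _ _ hCy hay) (a_neg_le _ _ _ hCxy haxy)
    rw [hid] at L1
    rw [L2] at L1
    linarith
  · -- homogeneity
    intro c x hx
    show φ (pos (c • x)) - φ (neg (c • x)) = c * (φ (pos x) - φ (neg x))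
    obtain ⟨⟨Cx, hCx⟩, ⟨Bx, hBx⟩⟩ := hMx x hx
    have hax : ∀ k, a x k ≤ Bx := a_le_of_bound x Bx hBx
    rcases le_total 0 c with hc | hc
    · have h1 : pos (c • x) = c • pos x := by
        funext m
        simp only [hpos, Pi.smul_apply, smul_eq_mul]
        exact max_smul_eq c (x m) hc
      have h2 : neg (c • x) = c • neg x := by
        funext m
        simp only [hneg, Pi.smul_apply, smul_eq_mul]
        rw [← max_smul_eq c (-(x m)) hc]
        ring_nf
      rw [h1, h2, phi_cone_smul (pos x) Cx Bx (hpos_bdd _ _ hCx) (a_pos_le _ _ _ hCx hax) c hc,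
        phi_cone_smul (neg x) Cx Bx (hneg_bdd _ _ hCx) (a_neg_le _ _ _ hCx hax) c hc]
      ring
    · have hc' : 0 ≤ -c := by linarith
      have h1 : pos (c • x) = (-c) • neg x := by
        funext m
        simp only [hpos, hneg, Pi.smul_apply, smul_eq_mul]
        rw [← max_smul_eq (-c) (-(x m)) hc']
        ring_nf
      have h2 : neg (c • x) = (-c) • pos x := by
        funext m
        simp only [hpos, hneg, Pi.smul_apply, smul_eq_mul]
        rw [← max_smul_eq (-c) (x m) hc']
        ring_nf
      rw [h1, h2,
        phi_cone_smul (neg x) Cx Bx (hneg_bdd _ _ hCx) (a_neg_le _ _ _ hCx hax) (-c) hc',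
        phi_cone_smul (pos x) Cx Bx (hpos_bdd _ _ hCx) (a_pos_le _ _ _ hCx hax) (-c) hc']
      ring
  · -- boundedness
    refine ⟨1, fun x hx => ?_⟩
    show |φ (pos x) - φ (neg x)| ≤ 1 * Mnorm x
    obtain ⟨⟨Cx, hCx⟩, ⟨Bx, hBx⟩⟩ := hMx x hx
    have hbdd : BddAbove (Set.range fun n : ℕ => Ssum x (n + 1) / Ψ (n + 1)) := by
      refine ⟨Bx, ?_⟩
      rintro b ⟨n, rfl⟩
      exact hBx n
    have hterm : ∀ n : ℕ, Ssum x (n + 1) / Ψ (n + 1) ≤ Mnorm x := fun n =>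
      le_ciSup hbdd n
    have hax : ∀ k, a x k ≤ Mnorm x := a_le_of_bound x (Mnorm x) hterm
    have hp := phi_le (pos x) Cx (Mnorm x) (hpos_bdd _ _ hCx) (a_pos_le _ _ _ hCx hax)
    have hn := phi_le (neg x) Cx (Mnorm x) (hneg_bdd _ _ hCx) (a_neg_le _ _ _ hCx hax)
    have hp0 := phi_nonneg (pos x) Cx (Mnorm x) (hpos_bdd _ _ hCx) (a_pos_le _ _ _ hCx hax)
    have hn0 := phi_nonneg (neg x) Cx (Mnorm x) (hneg_bdd _ _ hCx) (a_neg_le _ _ _ hCx hax)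
    rw [one_mul, abs_le]
    constructor <;> linarith
  · -- symmetry
    intro x hx σ
    show φ (pos (x ∘ σ)) - φ (neg (x ∘ σ)) = φ (pos x) - φ (neg x)
    obtain ⟨⟨Cx, hCx⟩, -⟩ := hMx x hx
    have h1 : pos (x ∘ σ) = pos x ∘ σ := rfl
    have h2 : neg (x ∘ σ) = neg x ∘ σ := rfl
    have h3 : a (pos x ∘ σ) = a (pos x) := by
      funext k
      rw [ha]
      simp only
      rw [Ssum_perm (hpos_bdd _ _ hCx) σ]
    have h4 : a (neg x ∘ σ) = a (neg x) := by
      funext k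
      rw [ha]
      simp only
      rw [Ssum_perm (hneg_bdd _ _ hCx) σ]
    simp only [h1, h2, hφ, h3, h4]
  · -- nontriviality : the witness
    set w : ℕ → ℝ := wit Ψ n₀ with hw
    have hw_nonneg : ∀ m, 0 ≤ w m := wit_nonneg hn₀ hΨone hΨmono'
    have hw_le : ∀ m, w m ≤ Ψ n₀ := wit_le hn₀ hΨone hΨmono' hdub
    have hw_bdd : ∀ m, |w m| ≤ Ψ n₀ := fun m => by
      rw [abs_of_nonneg (hw_nonneg m)]; exact hw_le m
    have hw_sum : ∀ k : ℕ, ∑ m ∈ Finset.range (2 ^ k * n₀), w m = Ψ (2 ^ k * n₀) :=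
      sum_wit hn₀
    have hw_sum_le := sum_wit_le hn₀ hΨone hΨmono' hdub
    -- Ssum bound
    have hSsum_w : ∀ n : ℕ, Ssum w (n + 1) ≤ 9 / 2 * Ψ n₀ * Ψ (n + 1) := by
      intro n
      have hex : ∃ k : ℕ, n + 1 ≤ 2 ^ k * n₀ :=
        ⟨n + 1, le_trans (Nat.lt_two_pow_self (n := n + 1)).le (Nat.le_mul_of_pos_right _ hn₀)⟩
      set K := Nat.find hex with hK
      have hKle : n + 1 ≤ 2 ^ K * n₀ := Nat.find_spec hex
      have hbound : Ψ (2 ^ K * n₀) ≤ 3 / 2 * Ψ n₀ * Ψ (n + 1) := by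
        rcases Nat.eq_zero_or_pos K with hK0 | hKpos
        · rw [hK0]
          simp only [pow_zero, one_mul]
          have h1 : (1:ℝ) ≤ Ψ (n + 1) := hΨone _ (by omega)
          have h2 : (1:ℝ) ≤ Ψ n₀ := hΨone _ hn₀
          nlinarith
        · obtain ⟨k, hk⟩ := Nat.exists_eq_succ_of_ne_zero (Nat.pos_iff_ne_zero.mp hKpos)
          have hmin : ¬ (n + 1 ≤ 2 ^ k * n₀) := Nat.find_min hex (by omega)
          push_neg at hmin
          have h1 : Ψ (2 ^ k * n₀) ≤ Ψ (n + 1) := hΨmono' _ _ (hpm1 k) (by omega)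
          have h2 := hdub_t hn₀ hdub k
          have h3 : (1:ℝ) ≤ Ψ n₀ := hΨone _ hn₀
          have h4 : (0:ℝ) < Ψ (n + 1) := hΨpos _ (by omega)
          rw [hk]
          nlinarith
      have hS : Ssum w (n + 1) ≤ 3 * Ψ (2 ^ K * n₀) := by
        refine Ssum_le_of_forall hw_bdd fun A hA => ?_
        have he : ∑ m ∈ A, |w m| = ∑ m ∈ A, w m :=
          Finset.sum_congr rfl fun m _ => abs_of_nonneg (hw_nonneg m)
        rw [he]
        exact hw_sum_le K A (le_trans hA hKle)
      have h5 : (0:ℝ) < 3 := by norm_num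
      nlinarith [hbound]
    have hwM : w ∈ M := by
      refine ⟨⟨Ψ n₀, hw_bdd⟩, ⟨9 / 2 * Ψ n₀, fun n => ?_⟩⟩
      have h4 : (0:ℝ) < Ψ (n + 1) := hΨpos _ (by omega)
      rw [div_le_iff₀ h4]
      exact hSsum_w n
    refine ⟨w, hwM, ?_⟩
    show φ (pos w) - φ (neg w) ≠ 0
    -- neg part vanishes
    have hnegw : neg w = fun _ => (0:ℝ) := by
      funext m
      simp only [hneg]
      exact max_eq_right (by linarith [hw_nonneg m])
    have hposw : pos w = w := by
      funext m
      simp only [hpos]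
      exact max_eq_left (hw_nonneg m)
    have hzero : φ (fun _ : ℕ => (0:ℝ)) = 0 := by
      have hz : ∀ m, |(fun _ : ℕ => (0:ℝ)) m| ≤ 0 := fun m => by simp
      have haz : a (fun _ : ℕ => (0:ℝ)) = fun _ => (0:ℝ) := by
        funext k
        rw [ha]
        simp only
        have h1 : Ssum (fun _ : ℕ => (0:ℝ)) (2 ^ k * n₀) ≤ 0 :=
          Ssum_le_of_forall hz fun A hA => by simp
        have h2 : 0 ≤ Ssum (fun _ : ℕ => (0:ℝ)) (2 ^ k * n₀) := Ssum_nonneg hz _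
        rw [le_antisymm h1 h2]
        simp
      rw [hφ]
      simp only
      rw [haz, BL_const]
    -- φ w ≥ 1
    have hone_le : ∀ k, 1 ≤ a w k := by
      intro k
      rw [ha]
      simp only
      rw [le_div_iff₀ (htpos k)]
      have h1 : ∑ m ∈ Finset.range (2 ^ k * n₀), |w m| ≤ Ssum w (2 ^ k * n₀) :=
        sum_le_Ssum hw_bdd (le_of_eq (Finset.card_range _))
      have h2 : ∑ m ∈ Finset.range (2 ^ k * n₀), |w m|
          = ∑ m ∈ Finset.range (2 ^ k * n₀), w m :=
        Finset.sum_congr rfl fun m _ => abs_of_nonneg (hw_nonneg m)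
      rw [h2, hw_sum k] at h1
      linarith
    have haw_le : ∀ k, a w k ≤ 9 / 2 * Ψ n₀ := by
      refine a_le_of_bound w _ fun n => ?_
      have h4 : (0:ℝ) < Ψ (n + 1) := hΨpos _ (by omega)
      rw [div_le_iff₀ h4]
      exact hSsum_w n
    have haw0 : ∀ k, 0 ≤ a w k := a_nonneg w (Ψ n₀) hw_bdd
    have hawabs : ∀ k, |a w k| ≤ 9 / 2 * Ψ n₀ := fun k => by
      rw [abs_of_nonneg (haw0 k)]; exact haw_le k
    have hphiw : 1 ≤ φ w := BL_const_le hawabs hone_le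
    simp only [hposw, hnegw, hzero]
    intro hcon
    rw [sub_zero] at hcon
    linarith [hcon ▸ hphiw]
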